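/- arXiv:1812.11417 — 9 statements merged into one kernel-verified Lean document; each statement's English description precedes it below -/
import Mathlib

section
/- (Lemma 1, dynamical part.) If N₁ > 0, N₂ > 0 and N₃ ≥ 0, then there exist real numbers S_∞ and R_∞ with 0 < S_∞ < N₁ such that, as t → ∞, S(t) → S_∞, I(t) → 0 and R(t) → R_∞ = N − S_∞; moreover R_∞ satisfies the fixed-point equation R_∞ = −(γ/β)·ln(N − R_∞) + C_R, where C_R = N₃ + (γ/β)·ln N₁. -/
open Filter Topology Set

private lemma sir_aux_const {f : ℝ → ℝ}
    (hf : ∀ t, 0 ≤ t → HasDerivAt f 0 t) : ∀ t, 0 ≤ t → f t = f 0 := fun t ht =>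
  constant_of_has_deriv_right_zero
    (fun x hx => (hf x hx.1).continuousAt.continuousWithinAt)
    (fun x hx => (hf x hx.1).hasDerivWithinAt) t ⟨ht, le_rfl⟩

/-- Lemma 1, dynamical part. There exist `S_∞`, `R_∞` with
`0 < S_∞ < N₁` such that `S → S_∞`, `I → 0`, `R → R_∞ = N - S_∞` as `t → ∞`,
and `R_∞ = -(γ/β)·ln(N - R_∞) + C_R` with `C_R = N₃ + (γ/β)·ln N₁`. -/
theorem sir_steady_state_limit
    (β γ : ℝ) (hβ : 0 < β) (hγ : 0 < γ)
    (S I R : ℝ → ℝ) (N₁ N₂ N₃ N : ℝ)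
    (hS : ∀ t, 0 ≤ t → HasDerivAt S (-β * I t * S t) t)
    (hI : ∀ t, 0 ≤ t → HasDerivAt I (β * I t * S t - γ * I t) t)
    (hR : ∀ t, 0 ≤ t → HasDerivAt R (γ * I t) t)
    (hS0 : S 0 = N₁) (hI0 : I 0 = N₂) (hR0 : R 0 = N₃)
    (hN : N = N₁ + N₂ + N₃)
    (hN₁ : 0 < N₁) (hN₂ : 0 < N₂) (hN₃ : 0 ≤ N₃) :
    ∃ Sinf Rinf : ℝ, 0 < Sinf ∧ Sinf < N₁ ∧
      Tendsto S atTop (𝓝 Sinf) ∧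
      Tendsto I atTop (𝓝 0) ∧
      Tendsto R atTop (𝓝 Rinf) ∧
      Rinf = N - Sinf ∧
      Rinf = -(γ / β) * Real.log (N - Rinf) + (N₃ + (γ / β) * Real.log N₁) := by
  have hSc : ContinuousOn S (Ici 0) := fun t ht => (hS t ht).continuousAt.continuousWithinAt
  -- an extension of S that is continuous on all of ℝ
  set Sm : ℝ → ℝ := fun t => S (max t 0) with hSmdef
  have hSmc : Continuous Sm :=
    hSc.comp_continuous (continuous_id.max continuous_const) fun x => le_max_right x 0
  have hSmeq : ∀ t, 0 ≤ t → Sm t = S t := fun t ht => by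
    simp only [hSmdef, max_eq_left ht]
  -- the integral A of β S - γ
  set A : ℝ → ℝ := fun t => ∫ u in (0:ℝ)..t, (β * Sm u - γ) with hAdef
  have hAc : Continuous fun u => β * Sm u - γ := by continuity
  have hAd : ∀ t, HasDerivAt A (β * Sm t - γ) t := fun t =>
    (hAc.integral_hasStrictDerivAt 0 t).hasDerivAt
  have hA0 : A 0 = 0 := intervalIntegral.integral_same
  -- I t = N₂ exp (A t) > 0
  have hIconst : ∀ t, 0 ≤ t → I t * Real.exp (-A t) = N₂ := by
    intro t ht
    have h := sir_aux_const (f := fun t => I t * Real.exp (-A t)) ?_ t ht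
    · simpa [hA0, hI0] using h
    · intro u hu
      have h1 := (hI u hu).mul ((hAd u).neg.exp)
      refine h1.congr_deriv ?_
      rw [hSmeq u hu]; ring
  have hIpos : ∀ t, 0 ≤ t → 0 < I t := by
    intro t ht
    have h := hIconst t ht
    nlinarith [Real.exp_pos (-A t)]
  -- conservation law: S t * exp(β/γ R t) is constant
  have hG : ∀ t, 0 ≤ t → S t * Real.exp (β/γ * R t) = N₁ * Real.exp (β/γ * N₃) := by
    intro t ht
    have h := sir_aux_const (f := fun t => S t * Real.exp (β/γ * R t)) ?_ t ht
    · simpa [hS0, hR0] using h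
    · intro u hu
      have h1 := (hS u hu).mul (((hR u hu).const_mul (β/γ)).exp)
      refine h1.congr_deriv ?_
      field_simp
      ring
  have hSval : ∀ t, 0 ≤ t → S t = N₁ * Real.exp (β/γ * N₃ - β/γ * R t) := by
    intro t ht
    have h := hG t ht
    have he := Real.exp_ne_zero (β/γ * R t)
    rw [Real.exp_sub, ← mul_div_assoc, eq_div_iff he]
    exact h
  have hSpos : ∀ t, 0 ≤ t → 0 < S t := by
    intro t ht
    rw [hSval t ht]
    positivity
  -- conservation of total population
  have hT : ∀ t, 0 ≤ t → S t + I t + R t = N := by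
    intro t ht
    have h := sir_aux_const (f := fun t => S t + I t + R t) ?_ t ht
    · simpa [hS0, hI0, hR0, hN.symm] using h
    · intro u hu
      have h1 := ((hS u hu).add (hI u hu)).add (hR u hu)
      refine h1.congr_deriv ?_; ring
  -- R is strictly increasing on [0, ∞)
  have hRmono : StrictMonoOn R (Ici 0) := by
    apply strictMonoOn_of_hasDerivWithinAt_pos (convex_Ici 0)
      (fun t ht => (hR t ht).continuousAt.continuousWithinAt)
      (f' := fun t => γ * I t)
    · intro t ht
      rw [interior_Ici] at ht
      exact (hR t ht.le).hasDerivWithinAt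
    · intro t ht
      rw [interior_Ici] at ht
      exact mul_pos hγ (hIpos t ht.le)
  have hRle : ∀ u, 0 ≤ u → R u ≤ N := fun u hu => by
    have h := hT u hu
    nlinarith [hSpos u hu, hIpos u hu]
  -- R converges
  set Rm : ℝ → ℝ := fun t => R (max t 0) with hRmdef
  have hRmMono : Monotone Rm := fun s t hst =>
    hRmono.monotoneOn (mem_Ici.2 (le_max_right s 0)) (mem_Ici.2 (le_max_right t 0))
      (max_le_max hst le_rfl)
  have hRmBdd : BddAbove (Set.range Rm) := by
    refine ⟨N, ?_⟩
    rintro x ⟨t, rfl⟩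
    exact hRle _ (le_max_right t 0)
  set Rinf := ⨆ t, Rm t with hRinfdef
  have hRmTend : Tendsto Rm atTop (𝓝 Rinf) := tendsto_atTop_ciSup hRmMono hRmBdd
  have hReq : Rm =ᶠ[atTop] R := by
    filter_upwards [eventually_ge_atTop (0:ℝ)] with t ht
    simp only [hRmdef, max_eq_left ht]
  have hRT : Tendsto R atTop (𝓝 Rinf) := hRmTend.congr' hReq
  -- S converges to Sinf
  set Sinf := N₁ * Real.exp (β/γ * N₃ - β/γ * Rinf) with hSinfdef
  have hST : Tendsto S atTop (𝓝 Sinf) := by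
    have h1 : Tendsto (fun t => N₁ * Real.exp (β/γ * N₃ - β/γ * R t)) atTop (𝓝 Sinf) := by
      exact (((Real.continuous_exp.tendsto _).comp
        (tendsto_const_nhds.sub (hRT.const_mul _))).const_mul _)
    refine h1.congr' ?_
    filter_upwards [eventually_ge_atTop (0:ℝ)] with t ht
    exact (hSval t ht).symm
  have hSinfpos : 0 < Sinf := by rw [hSinfdef]; positivity
  -- I converges to Iinf := N - Sinf - Rinf
  set Iinf := N - Sinf - Rinf with hIinfdef
  have hIT : Tendsto I atTop (𝓝 Iinf) := by
    have h1 : Tendsto (fun t => N - S t - R t) atTop (𝓝 Iinf) :=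
      (tendsto_const_nhds.sub hST).sub hRT
    refine h1.congr' ?_
    filter_upwards [eventually_ge_atTop (0:ℝ)] with t ht
    have := hT t ht; linarith
  -- Iinf = 0
  have hIinf0 : Iinf = 0 := by
    have hge : 0 ≤ Iinf := by
      refine ge_of_tendsto hIT ?_
      filter_upwards [eventually_ge_atTop (0:ℝ)] with t ht
      exact (hIpos t ht).le
    rcases eq_or_lt_of_le hge with h | h
    · exact h.symm
    · exfalso
      have hev : ∀ᶠ t in atTop, Iinf / 2 ≤ I t := by
        filter_upwards [hIT.eventually (eventually_gt_nhds (by linarith : Iinf/2 < Iinf))]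
          with t ht using ht.le
      obtain ⟨T, hTev⟩ := (hev.and (eventually_ge_atTop (0:ℝ))).exists_forall_of_atTop
      set T' := max T 0 with hT'def
      have hlinD : ∀ u : ℝ, HasDerivAt (fun t => γ * (Iinf/2) * t) (γ * (Iinf/2)) u :=
        fun u => by simpa using (hasDerivAt_id u).const_mul (γ * (Iinf/2))
      have key : MonotoneOn (fun t => R t - γ * (Iinf/2) * t) (Ici T') := by
        apply monotoneOn_of_hasDerivWithinAt_nonneg (convex_Ici T')
          (f' := fun t => γ * I t - γ * (Iinf/2))
        · intro t ht
          have ht0 : 0 ≤ t := le_trans (le_max_right T 0) ht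
          exact ((hR t ht0).sub (hlinD t)).continuousAt.continuousWithinAt
        · intro t ht
          rw [interior_Ici] at ht
          have ht0 : 0 ≤ t := le_trans (le_max_right T 0) ht.le
          exact ((hR t ht0).sub (hlinD t)).hasDerivWithinAt
        · intro t ht
          rw [interior_Ici] at ht
          have ⟨h1, _⟩ := hTev t (le_trans (le_max_left T 0) ht.le)
          nlinarith
      have hlin : Tendsto (fun t => γ * (Iinf/2) * (t - T') + R T') atTop atTop := by
        apply tendsto_atTop_add_const_right
        exact (tendsto_atTop_add_const_right atTop (-T') tendsto_id |>.congr
          (fun t => by simp only [id_eq]; ring)).const_mul_atTop (by positivity)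
      have hRtop : Tendsto R atTop atTop := by
        refine tendsto_atTop_mono' atTop ?_ hlin
        filter_upwards [eventually_ge_atTop T'] with t ht
        have := key (mem_Ici.2 le_rfl) (mem_Ici.2 ht) ht
        simp only at this
        linarith
      exact not_tendsto_atTop_of_tendsto_nhds hRT hRtop
  have hRinfN : Rinf = N - Sinf := by rw [hIinfdef] at hIinf0; linarith
  -- Rinf > N₃
  have hR1 : N₃ < R 1 := by
    rw [← hR0]
    exact hRmono (mem_Ici.2 le_rfl) (mem_Ici.2 zero_le_one) zero_lt_one
  have hRinfgt : N₃ < Rinf := by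
    refine lt_of_lt_of_le hR1 (ge_of_tendsto hRT ?_)
    filter_upwards [eventually_ge_atTop (1:ℝ)] with t ht
    exact hRmono.monotoneOn (mem_Ici.2 zero_le_one) (mem_Ici.2 (by linarith)) ht
  have hSinfltN₁ : Sinf < N₁ := by
    rw [hSinfdef]
    have hexp : Real.exp (β/γ * N₃ - β/γ * Rinf) < 1 := by
      rw [Real.exp_lt_one_iff]
      have : 0 < β / γ := by positivity
      nlinarith
    nlinarith [Real.exp_pos (β/γ * N₃ - β/γ * Rinf)]
  refine ⟨Sinf, Rinf, hSinfpos, hSinfltN₁, hST, hIinf0 ▸ hIT, hRT, hRinfN, ?_⟩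
  -- fixed point equation
  have hNR : N - Rinf = Sinf := by linarith
  rw [hNR, hSinfdef, Real.log_mul hN₁.ne' (Real.exp_ne_zero _), Real.log_exp]
  field_simp
  ring
end

section
/- (Lemma 1, uniqueness of the steady state.) For any reals β, γ > 0, N₁ > 0, N₂ > 0, the equation −S + (γ/β)·ln S + C_I = 0, where C_I = N₁ + N₂ − (γ/β)·ln N₁, has exactly one solution S in the open interval (0, γ/β). Equivalently, setting R = N − S with N = N₁ + N₂ + N₃, the equation R = −(γ/β)·ln(N − R) + N₃ + (γ/β)·ln N₁ has exactly one solution R with N − R ∈ (0, γ/β). -/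
/-- Lemma 1, uniqueness of the steady state. The equation
`-S + (γ/β)·ln S + C_I = 0`, `C_I = N₁ + N₂ - (γ/β)·ln N₁`, has exactly one
solution `S ∈ (0, γ/β)`; equivalently, with `R = N - S`, the equation
`R = -(γ/β)·ln(N - R) + N₃ + (γ/β)·ln N₁` has exactly one solution `R` with
`N - R ∈ (0, γ/β)`. -/
theorem sir_steady_state_unique
    (β γ N₁ N₂ N₃ N : ℝ) (hβ : 0 < β) (hγ : 0 < γ)
    (hN₁ : 0 < N₁) (hN₂ : 0 < N₂) (hN₃ : 0 ≤ N₃) (hN : N = N₁ + N₂ + N₃) :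
    (∃! S : ℝ, S ∈ Set.Ioo 0 (γ / β) ∧
        -S + (γ / β) * Real.log S + (N₁ + N₂ - (γ / β) * Real.log N₁) = 0) ∧
    (∃! R : ℝ, (N - R) ∈ Set.Ioo 0 (γ / β) ∧
        R = -(γ / β) * Real.log (N - R) + (N₃ + (γ / β) * Real.log N₁)) := by
  set a := γ / β with ha
  have ha0 : 0 < a := div_pos hγ hβ
  set C := N₁ + N₂ - a * Real.log N₁ with hC
  set f : ℝ → ℝ := fun x => -x + a * Real.log x + C with hf
  -- strict monotonicity on (0, a]
  have hmono : ∀ x y : ℝ, 0 < x → x < y → y ≤ a → f x < f y := by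
    intro x y hx hxy hya
    have hy : 0 < y := hx.trans hxy
    have h1 : Real.log (x / y) < x / y - 1 := by
      refine Real.log_lt_sub_one_of_pos (div_pos hx hy) ?_
      intro h
      have := (div_eq_one_iff_eq hy.ne').mp h
      linarith
    rw [Real.log_div hx.ne' hy.ne'] at h1
    have h2 : y * (Real.log x - Real.log y) < x - y := by
      have := (mul_lt_mul_iff_right₀ hy).mpr h1
      have hyx : y * (x / y - 1) = x - y := by field_simp
      linarith [hyx ▸ this]
    have hL : Real.log x - Real.log y ≤ 0 := by
      have := Real.log_le_log hx hxy.le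
      linarith
    have h3 : a * (Real.log x - Real.log y) ≤ y * (Real.log x - Real.log y) :=
      mul_le_mul_of_nonpos_right hya hL
    simp only [hf]
    linarith
  -- f a > 0
  have hfa : 0 < f a := by
    have h1 : Real.log (N₁ / a) ≤ N₁ / a - 1 :=
      Real.log_le_sub_one_of_pos (div_pos hN₁ ha0)
    rw [Real.log_div hN₁.ne' ha0.ne'] at h1
    have h2 : a * (Real.log N₁ - Real.log a) ≤ N₁ - a := by
      have := (mul_le_mul_iff_right₀ ha0).mpr h1
      have : a * (Real.log N₁ - Real.log a) ≤ a * (N₁ / a - 1) := this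
      have hx : a * (N₁ / a - 1) = N₁ - a := by field_simp
      linarith
    simp only [hf, hC]
    linarith
  -- existence of a root in (0, a)
  set ε := min (a / 2) (Real.exp (-C / a)) with hε
  have hε0 : 0 < ε := lt_min (by linarith) (Real.exp_pos _)
  have hεa : ε < a := lt_of_le_of_lt (min_le_left _ _) (by linarith)
  have hfε : f ε < 0 := by
    have h1 : Real.log ε ≤ -C / a := by
      calc Real.log ε ≤ Real.log (Real.exp (-C / a)) :=
            Real.log_le_log hε0 (min_le_right _ _)
        _ = -C / a := Real.log_exp _
    have h2 : a * Real.log ε ≤ -C := by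
      have := (mul_le_mul_iff_right₀ ha0).mpr h1
      have hx : a * (-C / a) = -C := by field_simp
      linarith
    simp only [hf]
    linarith
  have hcont : ContinuousOn f (Set.Icc ε a) := by
    apply ContinuousOn.add
    apply ContinuousOn.add
    · exact (continuousOn_id.neg)
    · exact continuousOn_const.mul (Real.continuousOn_log.mono (by
        intro x hx
        simp only [Set.mem_compl_iff, Set.mem_singleton_iff]
        exact ne_of_gt (lt_of_lt_of_le hε0 hx.1)))
    · exact continuousOn_const
  have hex : ∃ S ∈ Set.Ioo ε a, f S = 0 := by
    have h0 : (0 : ℝ) ∈ Set.Ioo (f ε) (f a) := ⟨hfε, hfa⟩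
    have := intermediate_value_Ioo hεa.le hcont h0
    obtain ⟨S, hS, hfS⟩ := this
    exact ⟨S, hS, hfS⟩
  obtain ⟨S₀, hS₀mem, hS₀⟩ := hex
  have huniq : ∃! S : ℝ, S ∈ Set.Ioo 0 a ∧ f S = 0 := by
    refine ⟨S₀, ⟨⟨hε0.trans hS₀mem.1, hS₀mem.2⟩, hS₀⟩, ?_⟩
    rintro y ⟨⟨hy0, hya⟩, hfy⟩
    by_contra hne
    rcases lt_or_gt_of_ne hne with h | h
    · have := hmono y S₀ hy0 h hS₀mem.2.le
      rw [hfy, hS₀] at this; exact lt_irrefl _ this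
    · have := hmono S₀ y (hε0.trans hS₀mem.1) h hya.le
      rw [hfy, hS₀] at this; exact lt_irrefl _ this
  constructor
  · exact huniq
  · obtain ⟨S₀, ⟨hS₀mem, hS₀eq⟩, hSu⟩ := huniq
    subst hN
    have hss : N₁ + N₂ + N₃ - (N₁ + N₂ + N₃ - S₀) = S₀ := by ring
    refine ⟨N₁ + N₂ + N₃ - S₀, ⟨by rw [hss]; exact hS₀mem, ?_⟩, ?_⟩
    · rw [hss]
      simp only [hf, hC] at hS₀eq
      linarith
    · rintro R ⟨hRmem, hReq⟩
      have h2 : N₁ + N₂ + N₃ - R = S₀ := by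
        apply hSu
        refine ⟨hRmem, ?_⟩
        simp only [hf, hC]
        linarith
      linarith
end

section
/- (Lemma 2.) If N₁ > γ/β and N₂ > 0, then there exists a unique time t*_I > 0 with S(t*_I) = γ/β; moreover I'(t) > 0 for all t ∈ [0, t*_I), I'(t*_I) = 0 and I'(t) < 0 for all t > t*_I, so the infected mass I attains a strict global maximum over [0,∞) at t = t*_I, with peak value I(t*_I) = −γ/β + (γ/β)·ln(γ/β) + C_I, where C_I = N₁ + N₂ − (γ/β)·ln N₁. -/
open Set Real

/-- If `f` solves a linear ODE `f' = g·f` on `[0,∞)` with continuous coefficient `g`,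
and `f` vanishes at some `t₀ ≥ 0`, then `f 0 = 0` (backward Grönwall). -/
lemma sir_aux_never_zero (f g : ℝ → ℝ)
    (hf : ∀ t, 0 ≤ t → HasDerivAt f (g t * f t) t)
    (hg : ContinuousOn g (Ici 0))
    (t₀ : ℝ) (ht₀ : 0 ≤ t₀) (h0 : f t₀ = 0) : f 0 = 0 := by
  rcases eq_or_lt_of_le ht₀ with h | h
  · rw [← h] at h0; exact h0
  -- bound for |g| on [0, t₀]
  obtain ⟨K, hK⟩ : ∃ K, ∀ s ∈ Icc (0:ℝ) t₀, |g s| ≤ K := by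
    obtain ⟨K, hK⟩ := (isCompact_Icc (a := (0:ℝ)) (b := t₀)).exists_bound_of_continuousOn
      (hg.mono (Icc_subset_Ici_self))
    exact ⟨K, fun s hs => hK s hs⟩
  set F : ℝ → ℝ := fun s => f (t₀ - s) with hF
  have hmem : ∀ s ∈ Icc (0:ℝ) t₀, t₀ - s ∈ Icc (0:ℝ) t₀ := by
    intro s hs; constructor <;> [linarith [hs.2]; linarith [hs.1]]
  have hFderiv : ∀ s ∈ Ico (0:ℝ) t₀,
      HasDerivWithinAt F (-(g (t₀ - s) * f (t₀ - s))) (Ici s) s := by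
    intro s hs
    have h1 : HasDerivAt (fun s : ℝ => t₀ - s) (-1) s := by
      simpa using (hasDerivAt_id s).const_sub t₀
    have h2 := (hf (t₀ - s) (by linarith [hs.2])).comp s h1
    have : HasDerivAt F (g (t₀ - s) * f (t₀ - s) * (-1)) s := h2
    simpa [mul_comm, mul_neg] using this.hasDerivWithinAt
  have hFcont : ContinuousOn F (Icc 0 t₀) := by
    have hfc : ContinuousOn f (Icc 0 t₀) := fun t ht =>
      ((hf t ht.1).continuousAt).continuousWithinAt
    exact hfc.comp (Continuous.continuousOn (by continuity)) hmem
  have hbound : ∀ s ∈ Ico (0:ℝ) t₀, ‖-(g (t₀ - s) * f (t₀ - s))‖ ≤ K * ‖F s‖ + 0 := by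
    intro s hs
    have h1 : |g (t₀ - s)| ≤ K := hK _ (hmem s ⟨hs.1, hs.2.le⟩)
    have h2 : (0:ℝ) ≤ |f (t₀ - s)| := abs_nonneg _
    have : ‖-(g (t₀ - s) * f (t₀ - s))‖ = |g (t₀ - s)| * |f (t₀ - s)| := by
      rw [norm_neg]; exact abs_mul _ _
    rw [this]
    have : |g (t₀ - s)| * |f (t₀ - s)| ≤ K * |f (t₀ - s)| :=
      mul_le_mul_of_nonneg_right h1 h2
    simpa [hF] using this
  have hF0 : ‖F 0‖ ≤ 0 := by simp [hF, h0]
  have := norm_le_gronwallBound_of_norm_deriv_right_le hFcont hFderiv hF0 hbound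
    t₀ ⟨ht₀, le_refl _⟩
  rw [gronwallBound_ε0_δ0] at this
  have : ‖F t₀‖ = 0 := le_antisymm this (norm_nonneg _)
  simpa [hF] using norm_eq_zero.mp this

/-- Lemma 2. If `N₁ > γ/β` and `N₂ > 0`, there is a unique
time `t*_I > 0` with `S t*_I = γ/β`; moreover `I' > 0` on `[0, t*_I)`,
`I'(t*_I) = 0`, `I' < 0` for `t > t*_I`, so `I` attains a strict global maximum
over `[0,∞)` at `t*_I`, with peak value
`I t*_I = -γ/β + (γ/β)·ln(γ/β) + C_I`, `C_I = N₁ + N₂ - (γ/β)·ln N₁`. -/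
theorem sir_infection_peak
    (β γ : ℝ) (hβ : 0 < β) (hγ : 0 < γ)
    (S I R : ℝ → ℝ) (N₁ N₂ N₃ N : ℝ)
    (hS : ∀ t, 0 ≤ t → HasDerivAt S (-β * I t * S t) t)
    (hI : ∀ t, 0 ≤ t → HasDerivAt I (β * I t * S t - γ * I t) t)
    (hR : ∀ t, 0 ≤ t → HasDerivAt R (γ * I t) t)
    (hS0 : S 0 = N₁) (hI0 : I 0 = N₂) (hR0 : R 0 = N₃)
    (hN : N = N₁ + N₂ + N₃)
    (hN₁ : γ / β < N₁) (hN₂ : 0 < N₂) :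
    ∃ tI : ℝ, 0 < tI ∧ S tI = γ / β ∧
      (∀ t' : ℝ, 0 < t' → S t' = γ / β → t' = tI) ∧
      (∀ t, 0 ≤ t → t < tI → 0 < β * I t * S t - γ * I t) ∧
      (β * I tI * S tI - γ * I tI = 0) ∧
      (∀ t, tI < t → β * I t * S t - γ * I t < 0) ∧
      (∀ t, 0 ≤ t → t ≠ tI → I t < I tI) ∧
      I tI = -(γ / β) + (γ / β) * Real.log (γ / β)
              + (N₁ + N₂ - (γ / β) * Real.log N₁) := by
  set ρ := γ / β with hρdef
  have hρ : 0 < ρ := div_pos hγ hβ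
  have hN₁pos : 0 < N₁ := lt_trans hρ hN₁
  have hScont : ContinuousOn S (Ici 0) := fun t ht => (hS t ht).continuousAt.continuousWithinAt
  have hIcont : ContinuousOn I (Ici 0) := fun t ht => (hI t ht).continuousAt.continuousWithinAt
  -- positivity of S
  have hSpos : ∀ t, 0 ≤ t → 0 < S t := by
    by_contra hcon
    push_neg at hcon
    obtain ⟨t₁, ht₁, ht₁'⟩ := hcon
    have hsub : Icc (S t₁) (S 0) ⊆ S '' Icc 0 t₁ :=
      intermediate_value_Icc' ht₁ (hScont.mono (Icc_subset_Ici_self))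
    obtain ⟨t₀, ht₀, hSt₀⟩ := hsub ⟨ht₁', by rw [hS0]; exact hN₁pos.le⟩
    have : S 0 = 0 := by
      refine sir_aux_never_zero S (fun t => -β * I t) ?_ ?_ t₀ ht₀.1 hSt₀
      · intro t ht; simpa [mul_assoc] using hS t ht
      · exact (continuousOn_const.mul hIcont)
    rw [hS0] at this; exact hN₁pos.ne' this
  -- positivity of I
  have hIpos : ∀ t, 0 ≤ t → 0 < I t := by
    by_contra hcon
    push_neg at hcon
    obtain ⟨t₁, ht₁, ht₁'⟩ := hcon
    have hsub : Icc (I t₁) (I 0) ⊆ I '' Icc 0 t₁ :=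
      intermediate_value_Icc' ht₁ (hIcont.mono (Icc_subset_Ici_self))
    obtain ⟨t₀, ht₀, hIt₀⟩ := hsub ⟨ht₁', by rw [hI0]; exact hN₂.le⟩
    have : I 0 = 0 := by
      refine sir_aux_never_zero I (fun t => β * S t - γ) ?_ ?_ t₀ ht₀.1 hIt₀
      · intro t ht
        have := hI t ht
        have heq : β * I t * S t - γ * I t = (β * S t - γ) * I t := by ring
        rwa [heq] at this
      · exact ((continuousOn_const.mul hScont).sub continuousOn_const)
    rw [hI0] at this; exact hN₂.ne' this
  -- S strictly decreasing on [0,∞)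
  have hSanti : StrictAntiOn S (Ici 0) := by
    refine strictAntiOn_of_deriv_neg (convex_Ici 0) hScont ?_
    intro t ht
    rw [interior_Ici] at ht
    rw [(hS t (le_of_lt ht)).deriv]
    have h1 : 0 < β * I t * S t := mul_pos (mul_pos hβ (hIpos t ht.le)) (hSpos t ht.le)
    linarith
  -- existence of a time where S ≤ ρ
  have hex : ∃ t, 0 ≤ t ∧ S t ≤ ρ := by
    by_contra hcon
    push_neg at hcon
    have hSgt : ∀ t, 0 ≤ t → ρ < S t := hcon
    -- I is monotone
    have hImono : MonotoneOn I (Ici 0) := by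
      refine monotoneOn_of_deriv_nonneg (convex_Ici 0) hIcont ?_ ?_
      · intro t ht
        rw [interior_Ici] at ht
        exact ((hI t ht.le).differentiableAt).differentiableWithinAt
      · intro t ht
        rw [interior_Ici] at ht
        rw [(hI t ht.le).deriv]
        have h1 := hIpos t ht.le
        have h2 := hSgt t ht.le
        have : γ < β * S t := by
          rw [hρdef, div_lt_iff₀ hβ] at h2; linarith [h2]
        nlinarith
    have hIge : ∀ t, 0 ≤ t → N₂ ≤ I t := by
      intro t ht
      have := hImono (self_mem_Ici) ht ht
      rwa [hI0] at this
    set c := β * N₂ * ρ with hc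
    have hcpos : 0 < c := by positivity
    set g : ℝ → ℝ := fun t => S t + c * t with hg
    have hganti : AntitoneOn g (Ici 0) := by
      refine antitoneOn_of_deriv_nonpos (convex_Ici 0) ?_ ?_ ?_
      · exact hScont.add (Continuous.continuousOn (by continuity))
      · intro t ht
        rw [interior_Ici] at ht
        exact (((hS t ht.le).differentiableAt).add
          ((differentiable_id.const_mul c) t)).differentiableWithinAt
      · intro t ht
        rw [interior_Ici] at ht
        have hder : HasDerivAt g (-β * I t * S t + c) t :=
          ((hS t ht.le).add ((hasDerivAt_id t).const_mul c)).congr_deriv (by ring)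
        rw [hder.deriv]
        have h1 := hIge t ht.le
        have h2 := (hSgt t ht.le).le
        have : c ≤ β * I t * S t := by
          rw [hc]
          have hb : 0 < I t := hIpos t ht.le
          gcongr <;> first | exact hρ.le | exact hN₂.le | positivity
        linarith
    set T := (N₁ - ρ) / c with hT
    have hTpos : 0 < T := div_pos (by linarith) hcpos
    have := hganti (self_mem_Ici) (le_of_lt hTpos) hTpos.le
    have hgT : S T + c * T ≤ N₁ := by simpa [hg, hS0] using this
    have hcT : c * T = N₁ - ρ := by
      rw [hT]; field_simp
    have : S T ≤ ρ := by linarith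
    exact absurd this (not_le.mpr (hSgt T hTpos.le))
  obtain ⟨t₁, ht₁, ht₁'⟩ := hex
  -- IVT to find tI
  have hsub : Icc (S t₁) (S 0) ⊆ S '' Icc 0 t₁ :=
    intermediate_value_Icc' ht₁ (hScont.mono (Icc_subset_Ici_self))
  obtain ⟨tI, htI, hStI⟩ := hsub ⟨ht₁', by rw [hS0]; exact hN₁.le⟩
  have htIpos : 0 < tI := by
    rcases eq_or_lt_of_le htI.1 with h | h
    · exfalso; rw [← h, hS0] at hStI; exact (ne_of_lt hN₁) hStI.symm
    · exact h
  refine ⟨tI, htIpos, hStI, ?_, ?_, ?_, ?_, ?_, ?_⟩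
  · -- uniqueness
    intro t' ht' hSt'
    by_contra hne
    rcases lt_or_gt_of_ne hne with h | h
    · have := hSanti ht'.le htIpos.le h
      rw [hSt', hStI] at this; exact lt_irrefl _ this
    · have := hSanti htIpos.le ht'.le h
      rw [hSt', hStI] at this; exact lt_irrefl _ this
  · -- I' > 0 before tI
    intro t ht htlt
    have hSgt : ρ < S t := by
      have := hSanti ht htIpos.le htlt
      rwa [hStI] at this
    have h1 := hIpos t ht
    have h2 : γ < β * S t := by rw [hρdef, div_lt_iff₀ hβ] at hSgt; linarith
    nlinarith
  · -- I' = 0 at tI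
    rw [hStI, hρdef]
    field_simp
    ring
  · -- I' < 0 after tI
    intro t htgt
    have ht : 0 ≤ t := le_of_lt (lt_trans htIpos htgt)
    have hSlt : S t < ρ := by
      have := hSanti htIpos.le ht htgt
      rwa [hStI] at this
    have h1 := hIpos t ht
    have h2 : β * S t < γ := by rw [hρdef, lt_div_iff₀ hβ] at hSlt; linarith
    nlinarith
  · -- strict global max
    intro t ht hne
    rcases lt_or_gt_of_ne hne with h | h
    · -- t < tI : I strictly monotone on [0, tI]
      have hmono : StrictMonoOn I (Icc 0 tI) := by
        refine strictMonoOn_of_deriv_pos (convex_Icc 0 tI) (hIcont.mono Icc_subset_Ici_self) ?_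
        intro x hx
        rw [interior_Icc] at hx
        rw [(hI x hx.1.le).deriv]
        have hSgt : ρ < S x := by
          have := hSanti hx.1.le htIpos.le hx.2
          rwa [hStI] at this
        have h1 := hIpos x hx.1.le
        have h2 : γ < β * S x := by rw [hρdef, div_lt_iff₀ hβ] at hSgt; linarith
        nlinarith
      exact hmono ⟨ht, h.le⟩ ⟨htIpos.le, le_refl _⟩ h
    · -- t > tI : I strictly antitone on [tI, ∞)
      have hanti : StrictAntiOn I (Ici tI) := by
        refine strictAntiOn_of_deriv_neg (convex_Ici tI) (hIcont.mono ?_) ?_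
        · exact fun x hx => le_trans htIpos.le hx
        · intro x hx
          rw [interior_Ici] at hx
          have hx0 : 0 ≤ x := le_trans htIpos.le hx.le
          rw [(hI x hx0).deriv]
          have hSlt : S x < ρ := by
            have := hSanti htIpos.le hx0 hx
            rwa [hStI] at this
          have h1 := hIpos x hx0
          have h2 : β * S x < γ := by rw [hρdef, lt_div_iff₀ hβ] at hSlt; linarith
          nlinarith
      exact hanti (self_mem_Ici) (le_of_lt h) h
  · -- peak value via conserved quantity
    set V : ℝ → ℝ := fun t => I t + S t - ρ * Real.log (S t) with hV
    have hVderiv : ∀ t, 0 ≤ t → HasDerivAt V 0 t := by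
      intro t ht
      have hSne : S t ≠ 0 := (hSpos t ht).ne'
      have hlog : HasDerivAt (fun u => Real.log (S u)) ((-β * I t * S t) / S t) t :=
        (hS t ht).log hSne
      have hd : HasDerivAt V
          ((β * I t * S t - γ * I t) + (-β * I t * S t) - ρ * ((-β * I t * S t) / S t)) t :=
        ((hI t ht).add (hS t ht)).sub (hlog.const_mul ρ)
      have heq : (β * I t * S t - γ * I t) + (-β * I t * S t) - ρ * ((-β * I t * S t) / S t)
          = 0 := by
        rw [hρdef]
        field_simp
        ring
      rwa [heq] at hd
    have hVconst : V tI = V 0 := by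
      have := constant_of_has_deriv_right_zero (f := V) (a := 0) (b := tI)
        (fun t ht => ((hVderiv t ht.1).continuousAt).continuousWithinAt)
        (fun t ht => (hVderiv t ht.1).hasDerivWithinAt)
      exact this tI ⟨htIpos.le, le_refl _⟩
    have hV0 : V 0 = N₂ + N₁ - ρ * Real.log N₁ := by
      simp [hV, hI0, hS0]
    have hVtI : V tI = I tI + ρ - ρ * Real.log ρ := by
      simp [hV, hStI]
    rw [hVtI, hV0] at hVconst
    rw [hρdef] at *
    linarith
end

section
/- (Core inequality of Proposition 1: the price peak leads the infection peak.) Fix reals β, γ > 0 and t > 0. Let I, S : [0,t] → ℝ be continuous with I(v)·S(v) > 0 for all v ∈ [0,t], and let P : [0,t] → ℝ be continuous with 0 < P(v) < P(t) for all v ∈ [0,t). If the price first-order condition β·I(t)·S(t)/P(t) = β·γ·∫₀ᵗ (I(v)·S(v)/P(v))·e^{−γ(t−v)} dv holds at time t, then β·I(t)·S(t) − β·γ·∫₀ᵗ I(v)·S(v)·e^{−γ(t−v)} dv > 0; that is, at any time where the equilibrium price peaks after a strictly rising price history, the mass of infected agents is still strictly increasing. -/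
/-- core inequality of Proposition 1: the price peak leads
the infection peak. If the price first-order condition
`β·I t·S t / P t = β·γ·∫₀ᵗ (I v·S v / P v)·e^{-γ(t-v)} dv` holds at a time `t`
after a strictly rising positive price history, then
`β·I t·S t - β·γ·∫₀ᵗ I v·S v·e^{-γ(t-v)} dv > 0`. -/
theorem price_peak_leads_infection_peak
    (β γ t : ℝ) (hβ : 0 < β) (hγ : 0 < γ) (ht : 0 < t)
    (I S P : ℝ → ℝ)
    (hIc : ContinuousOn I (Set.Icc 0 t))
    (hSc : ContinuousOn S (Set.Icc 0 t))
    (hPc : ContinuousOn P (Set.Icc 0 t))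
    (hIS : ∀ v ∈ Set.Icc 0 t, 0 < I v * S v)
    (hPpos : ∀ v ∈ Set.Ico 0 t, 0 < P v)
    (hPlt : ∀ v ∈ Set.Ico 0 t, P v < P t)
    (hFOC : β * I t * S t / P t
        = β * γ * ∫ v in (0:ℝ)..t, (I v * S v / P v) * Real.exp (-(γ * (t - v)))) :
    0 < β * I t * S t
        - β * γ * ∫ v in (0:ℝ)..t, I v * S v * Real.exp (-(γ * (t - v))) := by
  have h0 : (0:ℝ) ∈ Set.Ico 0 t := ⟨le_refl 0, ht⟩
  have hPt : 0 < P t := lt_trans (hPpos 0 h0) (hPlt 0 h0)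
  have hPne : ∀ v ∈ Set.Icc 0 t, P v ≠ 0 := by
    intro v hv
    rcases eq_or_lt_of_le hv.2 with h | h
    · rw [h]; exact ne_of_gt hPt
    · exact ne_of_gt (hPpos v ⟨hv.1, h⟩)
  set g : ℝ → ℝ := fun v => I v * S v * Real.exp (-(γ * (t - v))) with hg
  set h : ℝ → ℝ := fun v => P t * ((I v * S v / P v) * Real.exp (-(γ * (t - v)))) with hh
  have hgc : ContinuousOn g (Set.Icc 0 t) :=
    (hIc.mul hSc).mul (Real.continuous_exp.comp (by continuity)).continuousOn
  have hhc : ContinuousOn h (Set.Icc 0 t) :=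
    continuousOn_const.mul (((hIc.mul hSc).div hPc hPne).mul
      (Real.continuous_exp.comp (by continuity)).continuousOn)
  have key : (∫ v in (0:ℝ)..t, g v) < ∫ v in (0:ℝ)..t, h v := by
    apply intervalIntegral.integral_lt_integral_of_continuousOn_of_le_of_exists_lt ht hgc hhc
    · intro x hx
      have hx' : x ∈ Set.Icc 0 t := ⟨le_of_lt hx.1, hx.2⟩
      rcases eq_or_lt_of_le hx.2 with heq | hlt
      · subst heq
        simp only [hg, hh]
        have := ne_of_gt hPt
        field_simp
        exact le_rfl
      · have hPx : 0 < P x := hPpos x ⟨hx'.1, hlt⟩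
        have hISx : 0 < I x * S x := hIS x hx'
        have he : 0 < Real.exp (-(γ * (t - x))) := Real.exp_pos _
        have : I x * S x ≤ P t * (I x * S x / P x) := by
          rw [mul_div_assoc', le_div_iff₀ hPx]
          nlinarith [hPlt x ⟨hx'.1, hlt⟩]
        calc g x = I x * S x * Real.exp (-(γ * (t - x))) := rfl
          _ ≤ P t * (I x * S x / P x) * Real.exp (-(γ * (t - x))) := by
              exact mul_le_mul_of_nonneg_right this (le_of_lt he)
          _ = h x := by ring
    · refine ⟨0, ⟨le_refl 0, le_of_lt ht⟩, ?_⟩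
      have hP0 : 0 < P 0 := hPpos 0 h0
      have hIS0 : 0 < I 0 * S 0 := hIS 0 ⟨le_refl 0, le_of_lt ht⟩
      have he : 0 < Real.exp (-(γ * (t - 0))) := Real.exp_pos _
      have hlt' : I 0 * S 0 < P t * (I 0 * S 0 / P 0) := by
        rw [mul_div_assoc']
        rw [lt_div_iff₀ hP0]
        nlinarith [hPlt 0 h0]
      have : g 0 < h 0 := by
        simp only [hg, hh, ← mul_assoc]
        exact mul_lt_mul_of_pos_right hlt' he
      exact this
  have hint : (∫ v in (0:ℝ)..t, h v)
      = P t * ∫ v in (0:ℝ)..t, (I v * S v / P v) * Real.exp (-(γ * (t - v))) := by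
    simp [hh, intervalIntegral.integral_const_mul]
  have : β * γ * (∫ v in (0:ℝ)..t, g v) < β * I t * S t := by
    have hβγ : 0 < β * γ := mul_pos hβ hγ
    have := mul_lt_mul_of_pos_left key hβγ
    rw [hint] at this
    calc β * γ * ∫ v in (0:ℝ)..t, g v
        < β * γ * (P t * ∫ v in (0:ℝ)..t, (I v * S v / P v) * Real.exp (-(γ * (t - v)))) :=
          this
      _ = P t * (β * γ * ∫ v in (0:ℝ)..t, (I v * S v / P v) * Real.exp (-(γ * (t - v)))) := by
          ring
      _ = P t * (β * I t * S t / P t) := by rw [← hFOC]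
      _ = β * I t * S t := by field_simp
  linarith
end

section
/- (Long-run price, Proposition 1.) Let β, γ > 0 and P₀ > 0. Let I, S : [0,∞) → ℝ be continuous and nonnegative with I(t) → 0 as t → ∞ and β·∫₀ᵗ I(v)·S(v)·e^{−γ(t−v)} dv ≤ I(t) for all t ≥ 0, and let P : [0,∞) → ℝ be continuous with P(v) ≥ P₀ for all v. Then X_I(t) = β·∫₀ᵗ (I(v)·S(v)/P(v))·e^{−γ(t−v)} dv → 0 as t → ∞; consequently, if ψ : ℝ → ℝ is continuous at 0 with ψ(0) = P₀, the equilibrium price ψ(X_I(t)) converges to P₀ as t → ∞. -/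
open Filter Topology

/-- long-run price, Proposition 1. With `I → 0` and the
renewal bound, the infected cohorts' holdings `X_I t → 0` as `t → ∞`, and
hence the equilibrium price `ψ (X_I t) → P₀`. -/
theorem long_run_price
    (β γ P₀ : ℝ) (hβ : 0 < β) (hγ : 0 < γ) (hP₀ : 0 < P₀)
    (I S P : ℝ → ℝ)
    (hIc : ContinuousOn I (Set.Ici 0))
    (hSc : ContinuousOn S (Set.Ici 0))
    (hInonneg : ∀ t, 0 ≤ t → 0 ≤ I t)
    (hSnonneg : ∀ t, 0 ≤ t → 0 ≤ S t)
    (hIlim : Tendsto I atTop (𝓝 0))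
    (hbound : ∀ t, 0 ≤ t →
      β * (∫ v in (0:ℝ)..t, I v * S v * Real.exp (-(γ * (t - v)))) ≤ I t)
    (hPc : ContinuousOn P (Set.Ici 0))
    (hP : ∀ v, 0 ≤ v → P₀ ≤ P v)
    (X_I : ℝ → ℝ)
    (hX : ∀ t, X_I t = β * ∫ v in (0:ℝ)..t,
        (I v * S v / P v) * Real.exp (-(γ * (t - v)))) :
    Tendsto X_I atTop (𝓝 0) ∧
    ∀ ψ : ℝ → ℝ, ContinuousAt ψ 0 → ψ 0 = P₀ →
      Tendsto (fun t => ψ (X_I t)) atTop (𝓝 P₀) := by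
  have hPpos : ∀ v, 0 ≤ v → 0 < P v := fun v hv => lt_of_lt_of_le hP₀ (hP v hv)
  -- lower bound
  have hlow : ∀ t, 0 ≤ t → 0 ≤ X_I t := by
    intro t ht
    rw [hX t]
    apply mul_nonneg hβ.le
    apply intervalIntegral.integral_nonneg ht
    intro v hv
    have hv0 : 0 ≤ v := hv.1
    exact mul_nonneg (div_nonneg (mul_nonneg (hInonneg v hv0) (hSnonneg v hv0))
      (hPpos v hv0).le) (Real.exp_nonneg _)
  -- upper bound
  have hup : ∀ t, 0 ≤ t → X_I t ≤ I t / P₀ := by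
    intro t ht
    have hsub : Set.uIcc (0:ℝ) t ⊆ Set.Ici 0 := by
      rw [Set.uIcc_of_le ht]
      exact fun x hx => hx.1
    have hexp : Continuous fun v : ℝ => Real.exp (-(γ * (t - v))) := by
      continuity
    have hint1 : IntervalIntegrable
        (fun v => (I v * S v / P v) * Real.exp (-(γ * (t - v))))
        MeasureTheory.volume 0 t := by
      apply ContinuousOn.intervalIntegrable
      exact (((hIc.mono hsub).mul (hSc.mono hsub)).div (hPc.mono hsub)
        (fun v hv => (hPpos v (hsub hv)).ne')).mul hexp.continuousOn
    have hint2 : IntervalIntegrable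
        (fun v => (1 / P₀) * (I v * S v * Real.exp (-(γ * (t - v)))))
        MeasureTheory.volume 0 t := by
      apply ContinuousOn.intervalIntegrable
      exact continuousOn_const.mul (((hIc.mono hsub).mul (hSc.mono hsub)).mul
        hexp.continuousOn)
    have hmono : (∫ v in (0:ℝ)..t, (I v * S v / P v) * Real.exp (-(γ * (t - v))))
        ≤ ∫ v in (0:ℝ)..t, (1 / P₀) * (I v * S v * Real.exp (-(γ * (t - v)))) := by
      apply intervalIntegral.integral_mono_on ht hint1 hint2
      intro v hv
      have hv0 : 0 ≤ v := hv.1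
      have hIS : 0 ≤ I v * S v := mul_nonneg (hInonneg v hv0) (hSnonneg v hv0)
      have : I v * S v / P v ≤ I v * S v / P₀ :=
        div_le_div_of_nonneg_left hIS hP₀ (hP v hv0)
      calc I v * S v / P v * Real.exp (-(γ * (t - v)))
          ≤ I v * S v / P₀ * Real.exp (-(γ * (t - v))) :=
            mul_le_mul_of_nonneg_right this (Real.exp_nonneg _)
        _ = 1 / P₀ * (I v * S v * Real.exp (-(γ * (t - v)))) := by ring
    rw [hX t]
    calc β * ∫ v in (0:ℝ)..t, (I v * S v / P v) * Real.exp (-(γ * (t - v)))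
        ≤ β * ∫ v in (0:ℝ)..t, (1 / P₀) * (I v * S v * Real.exp (-(γ * (t - v)))) :=
          mul_le_mul_of_nonneg_left hmono hβ.le
      _ = (1 / P₀) * (β * ∫ v in (0:ℝ)..t, I v * S v * Real.exp (-(γ * (t - v)))) := by
          rw [intervalIntegral.integral_const_mul]; ring
      _ ≤ (1 / P₀) * I t :=
          mul_le_mul_of_nonneg_left (hbound t ht) (by positivity)
      _ = I t / P₀ := by ring
  have hXlim : Tendsto X_I atTop (𝓝 0) := by
    have hg : Tendsto (fun t => I t / P₀) atTop (𝓝 0) := by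
      simpa using hIlim.div_const P₀
    refine squeeze_zero' ?_ ?_ hg
    · filter_upwards [eventually_ge_atTop (0:ℝ)] with t ht using hlow t ht
    · filter_upwards [eventually_ge_atTop (0:ℝ)] with t ht using hup t ht
  refine ⟨hXlim, fun ψ hψ hψ0 => ?_⟩
  have := hψ.tendsto.comp hXlim
  rwa [hψ0] at this
end

section
/- (Convexity of S past the infection peak, used in the proof of Proposition 1.) If N₁ > 0 and N₂ > 0, then at every time t ≥ 0 with S(t) < γ/β one has S''(t) > 0. -/
open Set

/-- If `f' = c·f` on `[0,∞)` with `c` the restriction of a continuous-enough data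
(given via differentiability of the whole system), and `f 0 > 0`, then `f > 0` on `[0,∞)`. -/
lemma pos_of_linear_ode (f c : ℝ → ℝ)
    (hc : ContinuousOn c (Ici (0:ℝ)))
    (hf : ∀ t, 0 ≤ t → HasDerivAt f (c t * f t) t)
    (hf0 : 0 < f 0) : ∀ t, 0 ≤ t → 0 < f t := by
  set c' : ℝ → ℝ := fun t => c (max t 0) with hc'def
  have hc'cont : Continuous c' := by
    have hmax : Continuous (fun x : ℝ => max x 0) := continuous_id.max continuous_const
    exact hc.comp_continuous hmax (fun x => Set.mem_Ici.mpr (le_max_right _ _))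
  set C : ℝ → ℝ := fun t => ∫ x in (0:ℝ)..t, c' x with hCdef
  have hC : ∀ t, HasDerivAt C (c' t) t := fun t =>
    (hc'cont.integral_hasStrictDerivAt 0 t).hasDerivAt
  set g : ℝ → ℝ := fun t => f t * Real.exp (-C t) with hgdef
  have hg : ∀ t, 0 ≤ t → HasDerivAt g 0 t := by
    intro t ht
    have h1 : HasDerivAt (fun s => Real.exp (-C s)) (-c' t * Real.exp (-C t)) t := by
      have := (((hC t).neg).exp)
      simpa [mul_comm] using this
    have h2 := (hf t ht).mul h1
    have hct : c' t = c t := by simp [hc'def, max_eq_left ht]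
    have e : c t * f t * Real.exp (-C t) + f t * (-c' t * Real.exp (-C t)) = 0 := by rw [hct]; ring
    rw [e] at h2; exact h2
  intro t ht
  have hconst : g t = g 0 := by
    have := constant_of_has_deriv_right_zero (f := g) (a := 0) (b := t)
      (fun x hx => ((hg x hx.1).continuousAt).continuousWithinAt)
      (fun x hx => ((hg x hx.1).hasDerivWithinAt))
    exact this t ⟨ht, le_refl t⟩
  have hg0 : 0 < g 0 := mul_pos hf0 (Real.exp_pos _)
  have h2 : 0 < f t * Real.exp (-C t) := by rw [show f t * Real.exp (-C t) = g t from rfl, hconst]; exact hg0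
  have hexp : 0 < Real.exp (-C t) := Real.exp_pos _
  nlinarith [h2, hexp]

/-- convexity of `S` past the infection peak. If `N₁ > 0`
and `N₂ > 0`, then at every `t ≥ 0` with `S t < γ/β` one has `S'' t > 0`;
since `S' = -β·I·S` on `[0,∞)`, this says the derivative function
`t ↦ -β·I t·S t` has a strictly positive derivative within `[0,∞)` there. -/
theorem sir_susceptible_convex_past_peak
    (β γ : ℝ) (hβ : 0 < β) (hγ : 0 < γ)
    (S I R : ℝ → ℝ) (N₁ N₂ N₃ N : ℝ)
    (hS : ∀ t, 0 ≤ t → HasDerivAt S (-β * I t * S t) t)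
    (hI : ∀ t, 0 ≤ t → HasDerivAt I (β * I t * S t - γ * I t) t)
    (hR : ∀ t, 0 ≤ t → HasDerivAt R (γ * I t) t)
    (hS0 : S 0 = N₁) (hI0 : I 0 = N₂) (hR0 : R 0 = N₃)
    (hN : N = N₁ + N₂ + N₃)
    (hN₁ : 0 < N₁) (hN₂ : 0 < N₂) :
    ∀ t, 0 ≤ t → S t < γ / β →
      ∃ d : ℝ, 0 < d ∧
        HasDerivWithinAt (fun s => -β * I s * S s) d (Set.Ici 0) t := by
  have hScont : ContinuousOn S (Ici (0:ℝ)) :=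
    fun x hx => (hS x hx).continuousAt.continuousWithinAt
  have hIcont : ContinuousOn I (Ici (0:ℝ)) :=
    fun x hx => (hI x hx).continuousAt.continuousWithinAt
  have hSpos : ∀ t, 0 ≤ t → 0 < S t := by
    apply pos_of_linear_ode S (fun t => -β * I t)
    · exact (continuousOn_const.mul hIcont)
    · intro t ht; exact hS t ht
    · rw [hS0]; exact hN₁
  have hIpos : ∀ t, 0 ≤ t → 0 < I t := by
    apply pos_of_linear_ode I (fun t => β * S t - γ)
    · exact ((continuousOn_const.mul hScont).sub continuousOn_const)
    · intro t ht
      have := hI t ht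
      convert this using 1; ring
    · rw [hI0]; exact hN₂
  intro t ht hpeak
  have hSt := hSpos t ht
  have hIt := hIpos t ht
  have hfac : 0 < γ - β * S t + β * I t := by
    have : β * S t < γ := by
      rw [lt_div_iff₀ hβ] at hpeak; linarith [mul_comm (S t) β ▸ hpeak]
    nlinarith
  refine ⟨β * I t * S t * (γ - β * S t + β * I t), by positivity, ?_⟩
  have h := ((hI t ht).mul (hS t ht)).const_mul (-β)
  have : -β * ((β * I t * S t - γ * I t) * S t + I t * (-β * I t * S t))
      = β * I t * S t * (γ - β * S t + β * I t) := by ring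
  rw [this] at h
  exact (h.congr_deriv rfl).hasDerivWithinAt |>.congr
    (fun x _ => by simp only [Pi.mul_apply]; ring) (by simp only [Pi.mul_apply]; ring)
end

section
/- (Remark 1: rational expectations accelerate the boom.) Let γ > 0, let t₁ > 0, let f : [0,t₁] → ℝ be continuous with f(v) > 0 for all v, and let φ : (0,∞) → ℝ be continuous and strictly increasing. Suppose P_M, P_RE : [0,t₁] → (0,∞) are continuous and satisfy, for all t ∈ [0,t₁], the equilibrium conditions φ(P_M(t)) = ∫₀ᵗ (f(v)/P_M(v))·e^{−γ(t−v)} dv and φ(P_RE(t)) = ∫₀ᵗ (f(v)/P_RE(v)) dv. Then P_M(t) < P_RE(t) for all t ∈ (0, t₁]. -/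
open Set intervalIntegral Filter Topology

/-- A point with strictly positive derivative, having points of the domain strictly
to its left, cannot be a minimum of `d` on `Icc 0 s`. -/
lemma no_min_of_deriv_pos {d : ℝ → ℝ} {D m s : ℝ} (hm0 : 0 < m) (hms : m ≤ s)
    (hd : HasDerivAt d D m) (hD : 0 < D) (hmin : ∀ t ∈ Set.Icc 0 s, d m ≤ d t) : False := by
  have h1 : Filter.Tendsto (slope d m) (𝓝[<] m) (𝓝 D) :=
    (hasDerivAt_iff_tendsto_slope.mp hd).mono_left
      (nhdsWithin_mono m fun x hx => ne_of_lt hx)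
  have h2 : ∀ᶠ t in 𝓝[<] m, 0 < slope d m t := h1.eventually (eventually_gt_nhds hD)
  have h3 : Set.Ioo 0 m ∈ 𝓝[<] m := Ioo_mem_nhdsLT hm0
  obtain ⟨t, ht1, ht2⟩ := (h2.and h3).exists
  have htm : t - m < 0 := sub_neg.mpr ht2.2
  have hslope : slope d m t = (d t - d m) / (t - m) := by
    simp [slope_def_field]
  rw [hslope] at ht1
  have : d t - d m < 0 := by
    rcases div_pos_iff.mp ht1 with ⟨_, h⟩ | ⟨h, _⟩
    · linarith
    · exact h
  have : d m ≤ d t := hmin t ⟨ht2.1.le, ht2.2.le.trans hms⟩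
  linarith

/-- Remark 1: rational expectations accelerate the boom.
If `φ(P_M t) = ∫₀ᵗ (f v / P_M v)·e^{-γ(t-v)} dv` (cured agents sell at rate
`γ`) and `φ(P_RE t) = ∫₀ᵗ f v / P_RE v dv` (no selling before the peak), then
`P_M t < P_RE t` for all `t ∈ (0, t₁]`. -/
theorem re_accelerates_boom
    (γ t₁ : ℝ) (hγ : 0 < γ) (ht₁ : 0 < t₁)
    (f : ℝ → ℝ) (hfc : ContinuousOn f (Set.Icc 0 t₁))
    (hf : ∀ v ∈ Set.Icc 0 t₁, 0 < f v)
    (φ : ℝ → ℝ) (hφc : ContinuousOn φ (Set.Ioi 0))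
    (hφ : StrictMonoOn φ (Set.Ioi 0))
    (P_M P_RE : ℝ → ℝ)
    (hMc : ContinuousOn P_M (Set.Icc 0 t₁))
    (hREc : ContinuousOn P_RE (Set.Icc 0 t₁))
    (hMpos : ∀ t ∈ Set.Icc 0 t₁, 0 < P_M t)
    (hREpos : ∀ t ∈ Set.Icc 0 t₁, 0 < P_RE t)
    (heqM : ∀ t ∈ Set.Icc 0 t₁,
      φ (P_M t) = ∫ v in (0:ℝ)..t, (f v / P_M v) * Real.exp (-(γ * (t - v))))
    (heqRE : ∀ t ∈ Set.Icc 0 t₁,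
      φ (P_RE t) = ∫ v in (0:ℝ)..t, f v / P_RE v) :
    ∀ t ∈ Set.Ioc 0 t₁, P_M t < P_RE t := by
  have ht₁' : (0:ℝ) ≤ t₁ := ht₁.le
  -- clamp to `Icc 0 t₁`
  set c : ℝ → ℝ := fun v => max 0 (min v t₁) with hc_def
  have hc_cont : Continuous c := continuous_const.max (continuous_id.min continuous_const)
  have hc_mem : ∀ v, c v ∈ Set.Icc 0 t₁ :=
    fun v => ⟨le_max_left _ _, max_le ht₁' (min_le_right _ _)⟩
  have hc_eq : ∀ v ∈ Set.Icc 0 t₁, c v = v := by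
    intro v hv
    simp only [hc_def]
    rw [min_eq_left hv.2, max_eq_right hv.1]
  -- extended integrands
  set F_M : ℝ → ℝ := fun v => f (c v) / P_M (c v) with hFM_def
  set F_RE : ℝ → ℝ := fun v => f (c v) / P_RE (c v) with hFRE_def
  have hFMc : Continuous F_M := by
    apply Continuous.div (hfc.comp_continuous hc_cont hc_mem)
      (hMc.comp_continuous hc_cont hc_mem)
    exact fun v => (hMpos _ (hc_mem v)).ne'
  have hFREc : Continuous F_RE := by
    apply Continuous.div (hfc.comp_continuous hc_cont hc_mem)
      (hREc.comp_continuous hc_cont hc_mem)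
    exact fun v => (hREpos _ (hc_mem v)).ne'
  have hFMpos : ∀ v, 0 < F_M v := fun v => div_pos (hf _ (hc_mem v)) (hMpos _ (hc_mem v))
  have hFMeq : ∀ v ∈ Set.Icc 0 t₁, F_M v = f v / P_M v := by
    intro v hv; simp only [hFM_def, hc_eq v hv]
  have hFREeq : ∀ v ∈ Set.Icc 0 t₁, F_RE v = f v / P_RE v := by
    intro v hv; simp only [hFRE_def, hc_eq v hv]
  -- the two smooth auxiliary functions
  set A : ℝ → ℝ := fun t => ∫ v in (0:ℝ)..t, F_M v * Real.exp (γ * v) with hA_def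
  set U : ℝ → ℝ := fun t => A t * Real.exp (-(γ * t)) with hU_def
  set W : ℝ → ℝ := fun t => ∫ v in (0:ℝ)..t, F_RE v with hW_def
  have hAc : Continuous fun v => F_M v * Real.exp (γ * v) :=
    hFMc.mul (Real.continuous_exp.comp (continuous_const.mul continuous_id))
  have hA : ∀ t, HasDerivAt A (F_M t * Real.exp (γ * t)) t := by
    intro t
    exact intervalIntegral.integral_hasDerivAt_right (hAc.intervalIntegrable 0 t)
      (hAc.stronglyMeasurableAtFilter _ _) hAc.continuousAt
  have hexp : ∀ t, HasDerivAt (fun t => Real.exp (-(γ * t))) (-γ * Real.exp (-(γ * t))) t := by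
    intro t
    have h1 : HasDerivAt (fun t : ℝ => -(γ * t)) (-γ) t := by
      exact (((hasDerivAt_id t).const_mul γ).neg).congr_deriv (by ring)
    simpa [mul_comm] using h1.exp
  have hU : ∀ t, HasDerivAt U (F_M t - γ * U t) t := by
    intro t
    have := (hA t).mul (hexp t)
    have key : F_M t * Real.exp (γ * t) * Real.exp (-(γ * t)) + A t * (-γ * Real.exp (-(γ * t)))
        = F_M t - γ * U t := by
      rw [mul_assoc, ← Real.exp_add]
      simp [hU_def]
      ring
    rw [key] at this
    exact this
  have hW : ∀ t, HasDerivAt W (F_RE t) t :=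
    fun t => intervalIntegral.integral_hasDerivAt_right (hFREc.intervalIntegrable 0 t)
      (hFREc.stronglyMeasurableAtFilter _ _) hFREc.continuousAt
  -- equality with φ
  have hUeq : ∀ t ∈ Set.Icc 0 t₁, φ (P_M t) = U t := by
    intro t ht
    rw [heqM t ht, hU_def]
    simp only [hA_def]
    rw [← intervalIntegral.integral_mul_const]
    apply intervalIntegral.integral_congr
    intro v hv
    rw [Set.uIcc_of_le ht.1] at hv
    have hv' : v ∈ Set.Icc 0 t₁ := ⟨hv.1, hv.2.trans ht.2⟩
    show f v / P_M v * Real.exp (-(γ * (t - v))) = F_M v * Real.exp (γ * v) * Real.exp (-(γ * t))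
    rw [hFMeq v hv', mul_assoc, ← Real.exp_add]
    ring_nf
  have hWeq : ∀ t ∈ Set.Icc 0 t₁, φ (P_RE t) = W t := by
    intro t ht
    rw [heqRE t ht, hW_def]
    apply intervalIntegral.integral_congr
    intro v hv
    rw [Set.uIcc_of_le ht.1] at hv
    exact (hFREeq v ⟨hv.1, hv.2.trans ht.2⟩).symm
  -- positivity of U on (0, ∞)
  have hUpos : ∀ t, 0 < t → 0 < U t := by
    intro t ht
    have hApos : 0 < A t := by
      apply intervalIntegral.intervalIntegral_pos_of_pos_on (hAc.intervalIntegrable 0 t)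
        (fun x _ => mul_pos (hFMpos x) (Real.exp_pos _)) ht
    exact mul_pos hApos (Real.exp_pos _)
  -- the difference
  set d : ℝ → ℝ := fun t => W t - U t with hd_def
  have hd : ∀ t, HasDerivAt d (F_RE t - (F_M t - γ * U t)) t := fun t => (hW t).sub (hU t)
  have hd0 : d 0 = 0 := by simp [hd_def, hW_def, hU_def, hA_def]
  -- key positivity of d
  have hkey : ∀ s ∈ Set.Ioc 0 t₁, 0 < d s := by
    intro s hs
    by_contra hcon
    push_neg at hcon
    have hdc : ContinuousOn d (Set.Icc 0 s) :=
      fun t _ => (hd t).continuousAt.continuousWithinAt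
    obtain ⟨m, hmIcc, hmin⟩ := isCompact_Icc.exists_isMinOn
      ⟨0, Set.left_mem_Icc.mpr hs.1.le⟩ hdc
    have hmin' : ∀ t ∈ Set.Icc 0 s, d m ≤ d t := fun t ht => hmin ht
    -- choose a positive minimizer
    have hstep : ∀ m' : ℝ, 0 < m' → m' ≤ s → (∀ t ∈ Set.Icc 0 s, d m' ≤ d t) → False := by
      intro m' hm'0 hm's hmin''
      have hm'Icc : m' ∈ Set.Icc 0 t₁ := ⟨hm'0.le, hm's.trans hs.2⟩
      have hdm' : d m' ≤ 0 := le_trans (hmin'' s ⟨hs.1.le, le_refl s⟩) hcon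
      -- from d m' ≤ 0 : P_RE m' ≤ P_M m'
      have hWU : W m' ≤ U m' := by simpa [hd_def] using hdm'
      have hφle : φ (P_RE m') ≤ φ (P_M m') := by
        rw [hWeq m' hm'Icc, hUeq m' hm'Icc]; exact hWU
      have hPle : P_RE m' ≤ P_M m' :=
        (hφ.le_iff_le (hREpos m' hm'Icc) (hMpos m' hm'Icc)).mp hφle
      have hFle : F_M m' ≤ F_RE m' := by
        rw [hFMeq m' hm'Icc, hFREeq m' hm'Icc]
        exact div_le_div_of_nonneg_left (hf m' hm'Icc).le (hREpos m' hm'Icc) hPle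
      have hD : 0 < F_RE m' - (F_M m' - γ * U m') := by
        have := mul_pos hγ (hUpos m' hm'0)
        linarith
      exact no_min_of_deriv_pos hm'0 hm's (hd m') hD hmin''
    by_cases hm : 0 < m
    · exact hstep m hm hmIcc.2 hmin'
    · have hm0 : m = 0 := le_antisymm (not_lt.mp hm) hmIcc.1
      have hds : d s = 0 := by
        have h1 : d m ≤ d s := hmin' s ⟨hs.1.le, le_refl s⟩
        rw [hm0, hd0] at h1
        linarith
      apply hstep s hs.1 (le_refl s)
      intro t ht
      rw [hds]
      have := hmin' t ht
      rw [hm0, hd0] at this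
      exact this
  -- conclusion
  intro t ht
  have htIcc : t ∈ Set.Icc 0 t₁ := ⟨ht.1.le, ht.2⟩
  have hφlt : φ (P_M t) < φ (P_RE t) := by
    rw [hUeq t htIcc, hWeq t htIcc]
    have := hkey t ht
    simp only [hd_def] at this
    linarith
  by_contra hcon
  push_neg at hcon
  have := hφ.le_iff_le (hREpos t htIcc) (hMpos t htIcc) |>.mpr hcon
  linarith
end

section
/- (Remark 3: the peak price is lower under rational expectations.) Let γ > 0, let t₂ > 0, let f : [0,t₂] → ℝ be continuous with f(v) > 0 for all v, and let φ : (0,∞) → ℝ be strictly increasing. Suppose P_M, P_RE : [0,t₂] → (0,∞) are continuous and satisfy φ(P_M(t₂)) = ∫₀^{t₂} (f(v)/P_M(v))·e^{−γ(t₂−v)} dv and φ(P_RE(t₂)) = ∫₀^{t₂} (f(v)/P_RE(v))·e^{−γ(t₂−v)} dv. Then it is NOT the case that P_M(v) < P_RE(v) for all v ∈ [0, t₂); i.e., there exists v ∈ [0, t₂) with P_M(v) ≥ P_RE(v). Hence the immediate-selling price path P_M must reach the rational-expectations price level before time t₂. -/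
/-- Remark 3: the peak price is lower under rational
expectations. It cannot be that `P_M < P_RE` on all of `[0, t₂)`: there is
`v ∈ [0, t₂)` with `P_RE v ≤ P_M v`. -/
theorem re_peak_price_lower
    (γ t₂ : ℝ) (hγ : 0 < γ) (ht₂ : 0 < t₂)
    (f : ℝ → ℝ) (hfc : ContinuousOn f (Set.Icc 0 t₂))
    (hf : ∀ v ∈ Set.Icc 0 t₂, 0 < f v)
    (φ : ℝ → ℝ) (hφ : StrictMonoOn φ (Set.Ioi 0))
    (P_M P_RE : ℝ → ℝ)
    (hMc : ContinuousOn P_M (Set.Icc 0 t₂))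
    (hREc : ContinuousOn P_RE (Set.Icc 0 t₂))
    (hMpos : ∀ t ∈ Set.Icc 0 t₂, 0 < P_M t)
    (hREpos : ∀ t ∈ Set.Icc 0 t₂, 0 < P_RE t)
    (heqM : φ (P_M t₂)
      = ∫ v in (0:ℝ)..t₂, (f v / P_M v) * Real.exp (-(γ * (t₂ - v))))
    (heqRE : φ (P_RE t₂)
      = ∫ v in (0:ℝ)..t₂, (f v / P_RE v) * Real.exp (-(γ * (t₂ - v)))) :
    ¬ (∀ v ∈ Set.Ico 0 t₂, P_M v < P_RE v) := by
  intro h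
  -- endpoint inequality by continuity
  have ht₂mem : t₂ ∈ Set.Icc (0:ℝ) t₂ := Set.right_mem_Icc.2 ht₂.le
  have hne : (nhdsWithin t₂ (Set.Ico 0 t₂)).NeBot := by
    apply mem_closure_iff_nhdsWithin_neBot.mp
    rw [closure_Ico ht₂.ne]
    exact ht₂mem
  have htendM : Filter.Tendsto P_M (nhdsWithin t₂ (Set.Ico 0 t₂)) (nhds (P_M t₂)) :=
    (hMc.continuousWithinAt ht₂mem).mono_left
      (nhdsWithin_mono _ Set.Ico_subset_Icc_self)
  have htendRE : Filter.Tendsto P_RE (nhdsWithin t₂ (Set.Ico 0 t₂)) (nhds (P_RE t₂)) :=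
    (hREc.continuousWithinAt ht₂mem).mono_left
      (nhdsWithin_mono _ Set.Ico_subset_Icc_self)
  have hend : P_M t₂ ≤ P_RE t₂ := by
    refine le_of_tendsto_of_tendsto htendM htendRE ?_
    filter_upwards [self_mem_nhdsWithin] with v hv
    exact (h v hv).le
  -- pointwise comparison of integrands
  have hle : ∀ v ∈ Set.Icc (0:ℝ) t₂,
      f v / P_RE v ≤ f v / P_M v := by
    intro v hv
    have hPM : P_M v ≤ P_RE v := by
      rcases eq_or_lt_of_le hv.2 with rfl | hlt
      · exact hend
      · exact (h v ⟨hv.1, hlt⟩).le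
    exact div_le_div_of_nonneg_left (hf v hv).le (hMpos v hv) hPM
  have hintlt : (∫ v in (0:ℝ)..t₂, (f v / P_RE v) * Real.exp (-(γ * (t₂ - v))))
      < ∫ v in (0:ℝ)..t₂, (f v / P_M v) * Real.exp (-(γ * (t₂ - v))) := by
    apply intervalIntegral.integral_lt_integral_of_continuousOn_of_le_of_exists_lt ht₂
    · exact ((hfc.div hREc (fun v hv => (hREpos v hv).ne')).mul
        (Continuous.continuousOn (by continuity)))
    · exact ((hfc.div hMc (fun v hv => (hMpos v hv).ne')).mul
        (Continuous.continuousOn (by continuity)))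
    · intro x hx
      have hx' : x ∈ Set.Icc (0:ℝ) t₂ := ⟨hx.1.le, hx.2⟩
      exact mul_le_mul_of_nonneg_right (hle x hx') (Real.exp_pos _).le
    · refine ⟨0, Set.left_mem_Icc.2 ht₂.le, ?_⟩
      have h0 : (0:ℝ) ∈ Set.Icc (0:ℝ) t₂ := Set.left_mem_Icc.2 ht₂.le
      have hlt : f 0 / P_M 0 > f 0 / P_RE 0 :=
        div_lt_div_of_pos_left (hf 0 h0) (hMpos 0 h0) (h 0 ⟨le_refl _, ht₂⟩)
      exact mul_lt_mul_of_pos_right hlt (Real.exp_pos _)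
  rw [← heqM, ← heqRE] at hintlt
  have : P_RE t₂ < P_M t₂ :=
    (hφ.lt_iff_lt (hREpos t₂ ht₂mem) (hMpos t₂ ht₂mem)).mp hintlt
  exact absurd hend (not_le.2 this)
end

section
/- (Existence of the price peak, part of Proposition 1.) Let γ > 0 and P₀ > 0. Let I, S : [0,∞) → ℝ be continuous with I(v)·S(v) > 0 for all v ≥ 0 and I(t) → 0 as t → ∞, suppose β·∫₀ᵗ I(v)·S(v)·e^{−γ(t−v)} dv ≤ I(t) for all t ≥ 0, and let P : [0,∞) → ℝ be continuous with P(v) ≥ P₀ for all v. Then the holdings function X_I(t) = β·∫₀ᵗ (I(v)·S(v)/P(v))·e^{−γ(t−v)} dv satisfies X_I(0) = 0, X_I(t) > 0 for all t > 0, X_I(t) → 0 as t → ∞, and X_I attains a global maximum over [0,∞) at some time t*_P > 0 with X_I(t*_P) > 0; consequently, for any strictly increasing continuous ψ : ℝ → ℝ with ψ(0) = P₀ (the inverse excess-supply function), the price path ψ(X_I(t)) starts at P₀, attains a global maximum strictly above P₀ at t*_P, and returns to P₀ in the long run. -/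
open Filter Topology

/-- existence of the price peak, part of Proposition 1.
The holdings `X_I t = β·∫₀ᵗ (I v·S v / P v)·e^{-γ(t-v)} dv` start at `0`, are
positive for `t > 0`, vanish in the limit, and attain a global maximum over
`[0,∞)` at some `t*_P > 0`; hence for any strictly increasing continuous
inverse excess-supply `ψ` with `ψ 0 = P₀`, the price path `ψ (X_I t)` starts
at `P₀`, attains a global maximum strictly above `P₀` at `t*_P`, and returns
to `P₀` in the long run. -/
theorem price_peak_exists
    (β γ P₀ : ℝ) (hβ : 0 < β) (hγ : 0 < γ) (hP₀ : 0 < P₀)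
    (I S P : ℝ → ℝ)
    (hIc : ContinuousOn I (Set.Ici 0))
    (hSc : ContinuousOn S (Set.Ici 0))
    (hIS : ∀ v, 0 ≤ v → 0 < I v * S v)
    (hIlim : Tendsto I atTop (𝓝 0))
    (hbound : ∀ t, 0 ≤ t →
      β * (∫ v in (0:ℝ)..t, I v * S v * Real.exp (-(γ * (t - v)))) ≤ I t)
    (hPc : ContinuousOn P (Set.Ici 0))
    (hP : ∀ v, 0 ≤ v → P₀ ≤ P v)
    (X_I : ℝ → ℝ)
    (hX : ∀ t, X_I t = β * ∫ v in (0:ℝ)..t,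
        (I v * S v / P v) * Real.exp (-(γ * (t - v)))) :
    X_I 0 = 0 ∧
    (∀ t, 0 < t → 0 < X_I t) ∧
    Tendsto X_I atTop (𝓝 0) ∧
    ∃ tP : ℝ, 0 < tP ∧ 0 < X_I tP ∧ (∀ t, 0 ≤ t → X_I t ≤ X_I tP) ∧
      ∀ ψ : ℝ → ℝ, StrictMono ψ → Continuous ψ → ψ 0 = P₀ →
        ψ (X_I 0) = P₀ ∧
        P₀ < ψ (X_I tP) ∧
        (∀ t, 0 ≤ t → ψ (X_I t) ≤ ψ (X_I tP)) ∧
        Tendsto (fun t => ψ (X_I t)) atTop (𝓝 P₀) := by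
  have hPpos : ∀ v, 0 ≤ v → 0 < P v := fun v hv => lt_of_lt_of_le hP₀ (hP v hv)
  -- continuous extension via max
  set q : ℝ → ℝ := fun v => max v 0 with hqdef
  have hqc : Continuous q := continuous_id.max continuous_const
  have hq0 : ∀ v, q v ∈ Set.Ici (0:ℝ) := fun v => by simp only [hqdef]; exact Set.mem_Ici.2 (le_max_right _ _)
  have hIq : Continuous fun v => I (q v) := hIc.comp_continuous hqc hq0
  have hSq : Continuous fun v => S (q v) := hSc.comp_continuous hqc hq0
  have hPq : Continuous fun v => P (q v) := hPc.comp_continuous hqc hq0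
  set g : ℝ → ℝ := fun v => I (q v) * S (q v) / P (q v) * Real.exp (γ * v) with hgdef
  have hgc : Continuous g :=
    ((hIq.mul hSq).div hPq (fun v => (hPpos _ (hq0 v)).ne')).mul
      (Real.continuous_exp.comp (continuous_const.mul continuous_id))
  have hqv : ∀ v : ℝ, 0 ≤ v → q v = v := fun v hv => max_eq_left hv
  have hgpos : ∀ v, 0 ≤ v → 0 < g v := by
    intro v hv
    have hqv' := hqv v hv
    simp only [hgdef, hqv']
    exact mul_pos (div_pos (hIS v hv) (hPpos v hv)) (Real.exp_pos _)
  set F : ℝ → ℝ := fun t => ∫ v in (0:ℝ)..t, g v with hFdef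
  have hFc : Continuous F :=
    intervalIntegral.continuous_primitive (fun a b => hgc.intervalIntegrable a b) 0
  set Y : ℝ → ℝ := fun t => β * (Real.exp (-(γ * t)) * F t) with hYdef
  have hYc : Continuous Y :=
    continuous_const.mul
      ((Real.continuous_exp.comp ((continuous_const.mul continuous_id).neg)).mul hFc)
  have hXY : ∀ t, 0 ≤ t → X_I t = Y t := by
    intro t ht
    rw [hX]
    have hcongr : Set.EqOn (fun v => (I v * S v / P v) * Real.exp (-(γ * (t - v))))
        (fun v => Real.exp (-(γ * t)) * g v) (Set.uIcc 0 t) := by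
      intro v hv
      rw [Set.uIcc_of_le ht] at hv
      have hv0 : 0 ≤ v := hv.1
      simp only [hgdef, hqv v hv0]
      rw [show -(γ * (t - v)) = γ * v + -(γ * t) by ring, Real.exp_add]
      ring
    rw [intervalIntegral.integral_congr hcongr, intervalIntegral.integral_const_mul]
  have hX0 : X_I 0 = 0 := by rw [hX]; simp
  have hXpos : ∀ t, 0 < t → 0 < X_I t := by
    intro t ht
    rw [hXY t ht.le]
    have hF : 0 < F t :=
      intervalIntegral.intervalIntegral_pos_of_pos_on (hgc.intervalIntegrable 0 t)
        (fun x hx => hgpos x hx.1.le) ht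
    exact mul_pos hβ (mul_pos (Real.exp_pos _) hF)
  have hXnonneg : ∀ t, 0 ≤ t → 0 ≤ X_I t := by
    intro t ht
    rcases ht.lt_or_eq with h | h
    · exact (hXpos t h).le
    · rw [← h, hX0]
  -- upper bound X_I t ≤ I t / P₀
  have hupper : ∀ t, 0 ≤ t → X_I t ≤ I t / P₀ := by
    intro t ht
    rw [hX]
    have hIcc : Set.Icc (0:ℝ) t ⊆ Set.Ici 0 := fun x hx => hx.1
    have hec : Continuous fun v : ℝ => Real.exp (-(γ * (t - v))) :=
      Real.continuous_exp.comp ((continuous_const.mul (continuous_const.sub continuous_id)).neg)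
    have hint1 : IntervalIntegrable
        (fun v => (I v * S v / P v) * Real.exp (-(γ * (t - v)))) MeasureTheory.volume 0 t := by
      apply ContinuousOn.intervalIntegrable
      rw [Set.uIcc_of_le ht]
      exact (((hIc.mono hIcc).mul (hSc.mono hIcc)).div (hPc.mono hIcc)
        (fun x hx => (hPpos x hx.1).ne')).mul hec.continuousOn
    have hint2 : IntervalIntegrable
        (fun v => I v * S v * Real.exp (-(γ * (t - v))) / P₀) MeasureTheory.volume 0 t := by
      apply ContinuousOn.intervalIntegrable
      rw [Set.uIcc_of_le ht]
      exact (((hIc.mono hIcc).mul (hSc.mono hIcc)).mul hec.continuousOn).div_const _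
    have hmono : (∫ v in (0:ℝ)..t, (I v * S v / P v) * Real.exp (-(γ * (t - v)))) ≤
        ∫ v in (0:ℝ)..t, I v * S v * Real.exp (-(γ * (t - v))) / P₀ := by
      apply intervalIntegral.integral_mono_on ht hint1 hint2
      intro v hv
      have hv0 : 0 ≤ v := hv.1
      have h1 : I v * S v / P v ≤ I v * S v / P₀ :=
        div_le_div_of_nonneg_left (hIS v hv0).le hP₀ (hP v hv0)
      calc (I v * S v / P v) * Real.exp (-(γ * (t - v)))
          ≤ (I v * S v / P₀) * Real.exp (-(γ * (t - v))) :=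
            mul_le_mul_of_nonneg_right h1 (Real.exp_pos _).le
        _ = I v * S v * Real.exp (-(γ * (t - v))) / P₀ := by ring
    calc β * ∫ v in (0:ℝ)..t, (I v * S v / P v) * Real.exp (-(γ * (t - v)))
        ≤ β * ∫ v in (0:ℝ)..t, I v * S v * Real.exp (-(γ * (t - v))) / P₀ := by
          exact mul_le_mul_of_nonneg_left hmono hβ.le
      _ = (β * ∫ v in (0:ℝ)..t, I v * S v * Real.exp (-(γ * (t - v)))) / P₀ := by
          rw [intervalIntegral.integral_div]; ring
      _ ≤ I t / P₀ := by
          gcongr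
          exact hbound t ht
  have hXlim : Tendsto X_I atTop (𝓝 0) := by
    have hIdiv : Tendsto (fun t => I t / P₀) atTop (𝓝 0) := by
      have := hIlim.div_const P₀
      simpa using this
    apply tendsto_of_tendsto_of_tendsto_of_le_of_le' tendsto_const_nhds hIdiv
    · filter_upwards [eventually_ge_atTop (0:ℝ)] with t ht using hXnonneg t ht
    · filter_upwards [eventually_ge_atTop (0:ℝ)] with t ht using hupper t ht
  refine ⟨hX0, hXpos, hXlim, ?_⟩
  -- existence of maximum
  have hc1 : 0 < X_I 1 := hXpos 1 one_pos
  have hev : ∀ᶠ t in atTop, X_I t < X_I 1 := hXlim.eventually_lt_const hc1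
  obtain ⟨T, hT⟩ := eventually_atTop.1 hev
  set T' : ℝ := max T 1 with hT'def
  have hT'1 : (1:ℝ) ≤ T' := le_max_right _ _
  have hT'0 : (0:ℝ) ≤ T' := le_trans zero_le_one hT'1
  obtain ⟨tP, htPmem, htPmax⟩ :=
    (isCompact_Icc (a := (0:ℝ)) (b := T')).exists_isMaxOn (Set.nonempty_Icc.2 hT'0)
      (hYc.continuousOn)
  have h1mem : (1:ℝ) ∈ Set.Icc (0:ℝ) T' := ⟨zero_le_one, hT'1⟩
  have htP0 : 0 ≤ tP := htPmem.1
  have hXtP : X_I 1 ≤ X_I tP := by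
    rw [hXY 1 zero_le_one, hXY tP htP0]
    exact htPmax h1mem
  have hXtPpos : 0 < X_I tP := lt_of_lt_of_le hc1 hXtP
  have htPpos : 0 < tP := by
    rcases htP0.lt_or_eq with h | h
    · exact h
    · exfalso; rw [← h, hX0] at hXtPpos; exact lt_irrefl 0 hXtPpos
  have hmax : ∀ t, 0 ≤ t → X_I t ≤ X_I tP := by
    intro t ht
    by_cases hle : t ≤ T'
    · rw [hXY t ht, hXY tP htP0]; exact htPmax ⟨ht, hle⟩
    · push_neg at hle
      have : X_I t < X_I 1 := hT t (le_trans (le_max_left _ _) hle.le)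
      exact le_trans this.le hXtP
  refine ⟨tP, htPpos, hXtPpos, hmax, ?_⟩
  intro ψ hψm hψc hψ0
  refine ⟨by rw [hX0, hψ0], ?_, ?_, ?_⟩
  · rw [← hψ0]; exact hψm hXtPpos
  · intro t ht; exact hψm.monotone (hmax t ht)
  · have := (hψc.tendsto 0).comp hXlim
    rwa [hψ0] at this
end
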